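/- Fix w ∈ ℂ and n ≥ 1, and let f(z) = F_n(z,w). Then the function u_n(z) = e^{z·conj(w)} Σ_{s=1}^{n} (z̄^s/s!) (z−w)^{s−1} L^s_{n−s}(|z−w|²) solves the ∂̄-problem ∂̄u_n = f on ℂ. -/

import Mathlib

open Complex Finset

/-- The Wirtinger (Cauchy–Riemann) operator `∂̄u(z) = (1/2)(∂u/∂x + i ∂u/∂y)`. -/
noncomputable def dbar (u : ℂ → ℂ) (z : ℂ) : ℂ :=
  (1 / 2) * (fderiv ℝ u z 1 + Complex.I * fderiv ℝ u z Complex.I)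

/-- The polyanalytic Fock kernel of order `n`. -/
noncomputable def FockK (n : ℕ) (z w : ℂ) : ℂ :=
  Complex.exp (z * (starRingEnd ℂ) w) *
    ∑ k ∈ Finset.range n,
      ((-1) ^ k / (k.factorial : ℂ)) * (n.choose (k + 1)) * ((‖z - w‖ ^ (2 * k) : ℝ) : ℂ)

/-- The generalized Laguerre polynomial `L^α_m(x) = Σ_{k=0}^m ((−x)^k/k!) C(m+α, m−k)`. -/
noncomputable def laguerre (α m : ℕ) (x : ℝ) : ℝ :=
  ∑ k ∈ Finset.range (m + 1), (-x) ^ k / (k.factorial : ℝ) * ((m + α).choose (m - k))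

lemma hnorm (ζ : ℂ) : ((‖ζ‖ ^ 2 : ℝ) : ℂ) = ζ * (starRingEnd ℂ) ζ := by
  rw [Complex.mul_conj, Complex.normSq_eq_norm_sq]

noncomputable def Btel (n : ℕ) (t ζ X : ℂ) (j : ℕ) : ℂ :=
  t ^ j * ζ ^ j / (j.factorial : ℂ) *
    ∑ k ∈ Finset.range (n - j),
      ((-1) ^ k / (k.factorial : ℂ)) * ((n.choose (n - j - 1 - k) : ℕ) : ℂ) * X ^ k

lemma key (n : ℕ) (hn : 1 ≤ n) (t ζ X cc : ℂ) :
    (∑ s ∈ Finset.Icc 1 n, ∑ k ∈ Finset.range (n - s + 1),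
      (1 / (s.factorial : ℂ)) * ((-1) ^ k / (k.factorial : ℂ)) *
          ((n.choose (n - s - k) : ℕ) : ℂ) *
        ((↑s * t ^ (s - 1) * 1) * (ζ ^ (s - 1) * X ^ k)
          + t ^ s * ((↑(s - 1) * ζ ^ (s - 2) * 0) * X ^ k
              + ζ ^ (s - 1) * (↑k * X ^ (k - 1) * (0 * cc + ζ * 1)))))
    = ∑ k ∈ Finset.range n,
        ((-1) ^ k / (k.factorial : ℂ)) * ((n.choose (k + 1) : ℕ) : ℂ) * X ^ k := by
  have hreindex : (∑ s ∈ Finset.Icc 1 n, ∑ k ∈ Finset.range (n - s + 1),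
      (1 / (s.factorial : ℂ)) * ((-1) ^ k / (k.factorial : ℂ)) *
          ((n.choose (n - s - k) : ℕ) : ℂ) *
        ((↑s * t ^ (s - 1) * 1) * (ζ ^ (s - 1) * X ^ k)
          + t ^ s * ((↑(s - 1) * ζ ^ (s - 2) * 0) * X ^ k
              + ζ ^ (s - 1) * (↑k * X ^ (k - 1) * (0 * cc + ζ * 1)))))
      = ∑ i ∈ Finset.range n, (Btel n t ζ X i - Btel n t ζ X (i + 1)) := by
    rw [← Finset.Ico_add_one_right_eq_Icc, Finset.sum_Ico_eq_sum_range]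
    refine Finset.sum_congr rfl (fun i hi => ?_)
    have hin : i < n := Finset.mem_range.mp hi
    have e0 : 1 + i = i + 1 := Nat.add_comm 1 i
    rw [e0]
    have e1 : n - (i + 1) + 1 = n - i := by omega
    have e2 : i + 1 - 1 = i := by omega
    have e3 : i + 1 - 2 = i - 1 := by omega
    rw [e1]
    have hsplit : ∀ k : ℕ,
        (1 / ((i+1).factorial : ℂ)) * ((-1) ^ k / (k.factorial : ℂ)) *
            ((n.choose (n - (i+1) - k) : ℕ) : ℂ) *
          ((↑(i+1) * t ^ (i+1-1) * 1) * (ζ ^ (i+1-1) * X ^ k)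
            + t ^ (i+1) * ((↑(i+1-1) * ζ ^ (i+1-2) * 0) * X ^ k
                + ζ ^ (i+1-1) * (↑k * X ^ (k - 1) * (0 * cc + ζ * 1))))
        = (1 / ((i+1).factorial : ℂ)) * ((-1) ^ k / (k.factorial : ℂ)) *
            ((n.choose (n - (i+1) - k) : ℕ) : ℂ) * ((↑(i+1)) * (t ^ i * ζ ^ i) * X ^ k)
          + (1 / ((i+1).factorial : ℂ)) * ((-1) ^ k / (k.factorial : ℂ)) *
            ((n.choose (n - (i+1) - k) : ℕ) : ℂ) *
              (↑k * (t ^ (i+1) * ζ ^ (i+1)) * X ^ (k - 1)) := by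
      intro k
      rw [e2, e3]
      rw [pow_succ t i, pow_succ ζ i]
      ring
    rw [Finset.sum_congr rfl (fun k _ => hsplit k), Finset.sum_add_distrib]
    have hfact : ((i.factorial : ℂ)) ≠ 0 := Nat.cast_ne_zero.mpr (Nat.factorial_ne_zero i)
    have hfact1 : (((i+1).factorial : ℂ)) ≠ 0 := Nat.cast_ne_zero.mpr (Nat.factorial_ne_zero (i+1))
    have hP : (∑ k ∈ Finset.range (n - i),
        (1 / ((i+1).factorial : ℂ)) * ((-1) ^ k / (k.factorial : ℂ)) *
          ((n.choose (n - (i+1) - k) : ℕ) : ℂ) * ((↑(i+1)) * (t ^ i * ζ ^ i) * X ^ k))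
        = Btel n t ζ X i := by
      unfold Btel
      rw [Finset.mul_sum]
      refine Finset.sum_congr rfl (fun k _ => ?_)
      have ec : n - (i+1) - k = n - i - 1 - k := by omega
      have h1 : ((i:ℂ)+1) ≠ 0 := by
        have := Nat.cast_add_one_ne_zero (R := ℂ) i
        simpa using this
      have hfk : ((k.factorial : ℂ)) ≠ 0 := Nat.cast_ne_zero.mpr (Nat.factorial_ne_zero k)
      rw [ec, Nat.factorial_succ i]
      push_cast
      field_simp [h1, hfact, hfk]
    have hQ : (∑ k ∈ Finset.range (n - i),
        (1 / ((i+1).factorial : ℂ)) * ((-1) ^ k / (k.factorial : ℂ)) *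
          ((n.choose (n - (i+1) - k) : ℕ) : ℂ) *
            (↑k * (t ^ (i+1) * ζ ^ (i+1)) * X ^ (k - 1)))
        = - Btel n t ζ X (i + 1) := by
      rw [show n - i = (n - i - 1) + 1 from by omega, Finset.sum_range_succ']
      unfold Btel
      rw [Finset.mul_sum]
      simp only [Nat.cast_zero, Nat.add_sub_cancel, Nat.cast_add, Nat.cast_one]
      rw [show n - (i + 1) = n - i - 1 from by omega]
      rw [← Finset.sum_neg_distrib]
      simp only [zero_mul, mul_zero, add_zero]
      refine Finset.sum_congr rfl (fun j _ => ?_)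
      have ec : n - i - 1 - (j+1) = n - i - 1 - 1 - j := by omega
      have hfj : ((j.factorial : ℂ)) ≠ 0 := Nat.cast_ne_zero.mpr (Nat.factorial_ne_zero j)
      have h1j : ((j:ℂ)+1) ≠ 0 := by
        have := Nat.cast_add_one_ne_zero (R := ℂ) j
        simpa using this
      rw [ec, Nat.factorial_succ j, pow_succ (-1 : ℂ) j]
      push_cast
      field_simp [hfj, h1j, hfact1]
    rw [hP, hQ]
    ring
  rw [hreindex, Finset.sum_range_sub' (Btel n t ζ X) n]
  have hBn : Btel n t ζ X n = 0 := by
    unfold Btel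
    simp
  have hB0 : Btel n t ζ X 0 = ∑ k ∈ Finset.range n,
      ((-1) ^ k / (k.factorial : ℂ)) * ((n.choose (k + 1) : ℕ) : ℂ) * X ^ k := by
    unfold Btel
    simp only [pow_zero, Nat.factorial_zero, Nat.cast_one, Nat.sub_zero, one_mul, mul_one,
      div_one]
    refine Finset.sum_congr rfl (fun k hk => ?_)
    have hkn : k < n := Finset.mem_range.mp hk
    rw [show n - 1 - k = n - (k + 1) from by omega, Nat.choose_symm (by omega)]
  rw [hBn, hB0, sub_zero]


noncomputable def Wmap (a b : ℂ) : ℂ →L[ℝ] ℂ :=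
  ((ContinuousLinearMap.mul ℂ ℂ) a).restrictScalars ℝ +
    (((ContinuousLinearMap.mul ℂ ℂ) b).restrictScalars ℝ).comp
      (Complex.conjCLE : ℂ ≃L[ℝ] ℂ).toContinuousLinearMap

lemma Wmap_apply (a b v : ℂ) : Wmap a b v = a * v + b * (starRingEnd ℂ) v := rfl

def HasW (u : ℂ → ℂ) (z a b : ℂ) : Prop := HasFDerivAt u (Wmap a b) z

lemma HasW.const (c z : ℂ) : HasW (fun _ => c) z 0 0 := by
  have : Wmap 0 0 = 0 := by ext v; simp [Wmap_apply]
  unfold HasW; rw [this]; exact hasFDerivAt_const c z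

lemma HasW.of_hasDerivAt {u : ℂ → ℂ} {z d : ℂ} (h : HasDerivAt u d z) :
    HasW u z d 0 := by
  unfold HasW
  have h' := (h.hasFDerivAt.restrictScalars ℝ)
  convert h' using 1
  · rfl
  · rfl
  ext v
  simp [Wmap_apply, mul_comm]

lemma HasW.conj (z : ℂ) : HasW (fun z' => (starRingEnd ℂ) z') z 0 1 := by
  unfold HasW
  have h := Complex.conjCLE.hasFDerivAt (x := z)
  convert h using 1
  · rfl
  · rfl
  · rfl
  ext v; simp [Wmap_apply]

lemma HasW.add {u v : ℂ → ℂ} {z a b c d : ℂ} (hu : HasW u z a b) (hv : HasW v z c d) :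
    HasW (fun z' => u z' + v z') z (a + c) (b + d) := by
  unfold HasW at *
  have := hu.add hv
  convert this using 1
  · rfl
  · rfl
  · rfl
  ext y; simp [Wmap_apply]; ring

lemma HasW.mul {u v : ℂ → ℂ} {z a b c d : ℂ} (hu : HasW u z a b) (hv : HasW v z c d) :
    HasW (fun z' => u z' * v z') z (a * v z + u z * c) (b * v z + u z * d) := by
  unfold HasW at *
  have := hu.mul' hv
  convert this using 1
  · rfl
  · rfl
  · rfl
  ext y; simp [Wmap_apply, ContinuousLinearMap.smulRight_apply]; ring

lemma dbar_of_hasW {u : ℂ → ℂ} {z a b : ℂ} (h : HasW u z a b) :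
    (1 / 2 : ℂ) * (fderiv ℝ u z 1 + Complex.I * fderiv ℝ u z Complex.I) = b := by
  rw [h.fderiv]
  simp [Wmap_apply, Complex.conj_I]
  ring_nf
  linear_combination (a / 2 - b / 2) * Complex.I_sq

lemma HasW.pow {u : ℂ → ℂ} {z a b : ℂ} (hu : HasW u z a b) (m : ℕ) :
    HasW (fun z' => u z' ^ m) z (m * u z ^ (m - 1) * a) (m * u z ^ (m - 1) * b) := by
  induction m with
  | zero => simpa using HasW.const 1 z
  | succ j ih =>
    have h := hu.mul ih
    have e : (fun z' => u z' * u z' ^ j) = fun z' => u z' ^ (j + 1) := by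
      funext z'; rw [pow_succ]; ring
    rw [e] at h
    have ea : ∀ c : ℂ, c * u z ^ j + u z * (↑j * u z ^ (j - 1) * c)
        = ((j + 1 : ℕ) : ℂ) * u z ^ (j + 1 - 1) * c := by
      intro c
      cases j with
      | zero => simp
      | succ i => push_cast; ring
    rw [ea a, ea b] at h
    exact h

lemma HasW.sum {ι : Type*} (t : Finset ι) (u : ι → ℂ → ℂ) (a b : ι → ℂ) (z : ℂ)
    (h : ∀ i ∈ t, HasW (u i) z (a i) (b i)) :
    HasW (fun z' => ∑ i ∈ t, u i z') z (∑ i ∈ t, a i) (∑ i ∈ t, b i) := by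
  classical
  induction t using Finset.induction with
  | empty => simpa using HasW.const 0 z
  | insert x t' hx ih =>
    rw [Finset.sum_insert hx, Finset.sum_insert hx]
    have this1 := (h x (Finset.mem_insert_self x t')).add
      (ih fun i hi => h i (Finset.mem_insert_of_mem hi))
    have efun : (fun z' => ∑ i ∈ insert x t', u i z')
        = fun z' => u x z' + ∑ i ∈ t', u i z' := by
      funext z'; rw [Finset.sum_insert hx]
    rw [efun]
    exact this1

lemma HasW.const_mul {u : ℂ → ℂ} {z a b : ℂ} (c : ℂ) (hu : HasW u z a b) :
    HasW (fun z' => c * u z') z (c * a) (c * b) := by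
  have h := (HasW.const c z).mul hu
  simpa using h

lemma HasW.sub_const {z c : ℂ} : HasW (fun z' => z' - c) z 1 0 :=
  HasW.of_hasDerivAt ((hasDerivAt_id z).sub_const c)

lemma HasW.conj_sub_const (z c : ℂ) :
    HasW (fun z' => (starRingEnd ℂ) z' - (starRingEnd ℂ) c) z 0 1 := by
  have h := (HasW.conj z).add (HasW.const (-(starRingEnd ℂ) c) z)
  simpa [sub_eq_add_neg] using h

lemma HasW.exp_mul (z c : ℂ) :
    HasW (fun z' => Complex.exp (z' * c)) z (c * Complex.exp (z * c)) 0 := by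
  apply HasW.of_hasDerivAt
  have h := (Complex.hasDerivAt_exp (z * c)).comp z ((hasDerivAt_id z).mul_const c)
  simpa [mul_comm, Function.comp_def] using h

lemma dbar_eq {u : ℂ → ℂ} {z a b : ℂ} (h : HasW u z a b) : dbar u z = b := by
  unfold dbar; exact dbar_of_hasW h

theorem stmt_18 (w : ℂ) (n : ℕ) (hn : 1 ≤ n) :
    ∀ z : ℂ,
      dbar (fun z' => Complex.exp (z' * (starRingEnd ℂ) w) *
        ∑ s ∈ Finset.Icc 1 n, (starRingEnd ℂ) z' ^ s / (s.factorial : ℂ) *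
          (z' - w) ^ (s - 1) * ((laguerre s (n - s) (‖z' - w‖ ^ 2) : ℝ) : ℂ)) z =
      FockK n z w := by
  intro z
  have hFeq : (fun z' => Complex.exp (z' * (starRingEnd ℂ) w) *
        ∑ s ∈ Finset.Icc 1 n, (starRingEnd ℂ) z' ^ s / (s.factorial : ℂ) *
          (z' - w) ^ (s - 1) * ((laguerre s (n - s) (‖z' - w‖ ^ 2) : ℝ) : ℂ))
      = (fun z' => Complex.exp (z' * (starRingEnd ℂ) w) * ∑ s ∈ Finset.Icc 1 n, ∑ k ∈ Finset.range (n - s + 1), (1 / (s.factorial : ℂ)) * ((-1) ^ k / (k.factorial : ℂ)) * ((n.choose (n - s - k) : ℕ) : ℂ) * ((starRingEnd ℂ) z' ^ s * ((z' - w) ^ (s - 1) * ((z' - w) * ((starRingEnd ℂ) z' - (starRingEnd ℂ) w)) ^ k))) := by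
    funext z'
    congr 1
    refine Finset.sum_congr rfl (fun s hs => ?_)
    have hsn : s ≤ n := (Finset.mem_Icc.mp hs).2
    have hx : (((‖z' - w‖ : ℝ) : ℂ)) ^ 2 = (z' - w) * ((starRingEnd ℂ) z' - (starRingEnd ℂ) w) := by
      rw [← Complex.ofReal_pow, hnorm, map_sub]
    have hlag : ((laguerre s (n - s) (‖z' - w‖ ^ 2) : ℝ) : ℂ)
        = ∑ k ∈ Finset.range (n - s + 1),
            (-((z' - w) * ((starRingEnd ℂ) z' - (starRingEnd ℂ) w))) ^ k / (k.factorial : ℂ)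
              * ((n.choose (n - s - k) : ℕ) : ℂ) := by
      unfold laguerre
      rw [Nat.sub_add_cancel hsn]
      push_cast
      refine Finset.sum_congr rfl (fun k _ => ?_)
      rw [hx]
    rw [hlag, Finset.mul_sum]
    refine Finset.sum_congr rfl (fun k _ => ?_)
    rw [neg_pow]
    ring
  rw [hFeq]
  have hb := HasW.mul (HasW.exp_mul z ((starRingEnd ℂ) w))
    (HasW.sum (Finset.Icc 1 n) _ _ _ z (fun s hs =>
      HasW.sum (Finset.range (n - s + 1)) _ _ _ z (fun k hk =>
        HasW.const_mul ((1 / (s.factorial : ℂ)) * ((-1) ^ k / (k.factorial : ℂ)) * ((n.choose (n - s - k) : ℕ) : ℂ))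
          (((HasW.conj z).pow s).mul
            (((HasW.sub_const (z := z) (c := w)).pow (s - 1)).mul
              (((HasW.sub_const (z := z) (c := w)).mul (HasW.conj_sub_const z w)).pow k))))))
  have h2 : dbar (fun z' => Complex.exp (z' * (starRingEnd ℂ) w) * ∑ s ∈ Finset.Icc 1 n, ∑ k ∈ Finset.range (n - s + 1), (1 / (s.factorial : ℂ)) * ((-1) ^ k / (k.factorial : ℂ)) * ((n.choose (n - s - k) : ℕ) : ℂ) * ((starRingEnd ℂ) z' ^ s * ((z' - w) ^ (s - 1) * ((z' - w) * ((starRingEnd ℂ) z' - (starRingEnd ℂ) w)) ^ k))) z = 0 * (∑ s ∈ Finset.Icc 1 n, ∑ k ∈ Finset.range (n - s + 1), (1 / (s.factorial : ℂ)) * ((-1) ^ k / (k.factorial : ℂ)) * ((n.choose (n - s - k) : ℕ) : ℂ) * ((starRingEnd ℂ) z ^ s * ((z - w) ^ (s - 1) * ((z - w) * ((starRingEnd ℂ) z - (starRingEnd ℂ) w)) ^ k))) + Complex.exp (z * (starRingEnd ℂ) w) * ∑ s ∈ Finset.Icc 1 n, ∑ k ∈ Finset.range (n - s + 1), (1 /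 (s.factorial : ℂ)) * ((-1) ^ k / (k.factorial : ℂ)) * ((n.choose (n - s - k) : ℕ) : ℂ) * ((↑s * (starRingEnd ℂ) z ^ (s - 1) * 1) * ((z - w) ^ (s - 1) * ((z - w) * ((starRingEnd ℂ) z - (starRingEnd ℂ) w)) ^ k) + (starRingEnd ℂ) z ^ s * ((↑(s - 1) * (z - w) ^ (s - 1 - 1) * 0) * ((z - w) * ((starRingEnd ℂ) z - (starRingEnd ℂ) w)) ^ k + (z - w) ^ (s - 1) * (↑k * ((z - w) * ((starRingEnd ℂ) z - (starRingEnd ℂ) w)) ^ (k - 1) * (0 * ((starRingEnd ℂ) z - (starRingEnd ℂ) w) + (z - w) * 1)))) := dbar_eq hb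
  rw [h2, zero_mul, zero_add]
  have hR : FockK n z w = Complex.exp (z * (starRingEnd ℂ) w) *
      ∑ k ∈ Finset.range n, ((-1) ^ k / (k.factorial : ℂ)) * ((n.choose (k + 1) : ℕ) : ℂ) *
        ((z - w) * ((starRingEnd ℂ) z - (starRingEnd ℂ) w)) ^ k := by
    unfold FockK
    congr 1
    refine Finset.sum_congr rfl (fun k _ => ?_)
    have : ((‖z - w‖ ^ (2 * k) : ℝ) : ℂ) = ((z - w) * ((starRingEnd ℂ) z - (starRingEnd ℂ) w)) ^ k := by
      rw [pow_mul]
      push_cast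
      rw [show (((‖z - w‖ : ℝ) : ℂ)) ^ 2 = (z - w) * ((starRingEnd ℂ) z - (starRingEnd ℂ) w) from
        by rw [← Complex.ofReal_pow, hnorm, map_sub]]
    rw [this]
  rw [hR]
  congr 1
  exact key n hn ((starRingEnd ℂ) z) (z - w) ((z - w) * ((starRingEnd ℂ) z - (starRingEnd ℂ) w)) ((starRingEnd ℂ) z - (starRingEnd ℂ) w)
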